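/- Fix δ > 0 and ρ > 0, and let a ≥ 0. Then there exists a unique pair (τ², γ) with τ² ≥ 1 and γ > 0 satisfying the state-evolution fixed-point equations τ² = 1 + δ⁻¹·E[η_a(τZ; γ)²] and ρ = γ·(1 − δ⁻¹·E[η_a'(τZ; γ)]), where Z is a standard real Gaussian random variable. -/

import Mathlib

noncomputable section
open MeasureTheory ProbabilityTheory Filter
open scoped ENNReal NNReal

/-- The standard real Gaussian measure `N(0,1)`. -/
def stdGaussian : Measure ℝ := gaussianReal 0 1

/-- The denoiser `η_a(x; γ) = P_{[-a,a]}(x/(1+γ))`. -/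
def eta (a γ x : ℝ) : ℝ := max (-a) (min a (x / (1 + γ)))

/-- The derivative of the denoiser in `x` (defined except at `|x| = a(1+γ)`). -/
def eta' (a γ x : ℝ) : ℝ := if |x| < a * (1 + γ) then 1 / (1 + γ) else 0

/-- `(τ², γ)` solves the state-evolution fixed-point equations for parameters `(δ, ρ, a)`:
`τ² = 1 + δ⁻¹ E[η_a(τZ; γ)²]` and `ρ = γ (1 − δ⁻¹ E[η_a'(τZ; γ)])`, with `τ² ≥ 1, γ > 0`. -/
def IsSEFixedPoint (δ ρ a : ℝ) (p : ℝ × ℝ) : Prop :=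
  1 ≤ p.1 ∧ 0 < p.2 ∧
    p.1 = 1 + δ⁻¹ * ∫ z, (eta a p.2 (Real.sqrt p.1 * z)) ^ 2 ∂stdGaussian ∧
    ρ = p.2 * (1 - δ⁻¹ * ∫ z, eta' a p.2 (Real.sqrt p.1 * z) ∂stdGaussian)


section SEProofAux
open Real Topology

namespace SEAux

/-- standard normal pdf -/
def phi (x : ℝ) : ℝ := (Real.sqrt (2*Real.pi))⁻¹ * Real.exp (-x^2/2)

lemma phi_pos (x : ℝ) : 0 < phi x := by
  have : 0 < Real.sqrt (2*Real.pi) := Real.sqrt_pos.2 (by positivity)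
  exact mul_pos (inv_pos.2 this) (Real.exp_pos _)

lemma continuous_phi : Continuous phi :=
  continuous_const.mul (((continuous_pow 2).neg.div_const 2).rexp)

lemma phi_neg (x : ℝ) : phi (-x) = phi x := by simp [phi]

lemma hasDerivAt_phi (x : ℝ) : HasDerivAt phi (-x * phi x) x := by
  have h1 : HasDerivAt (fun y : ℝ => -y^2/2) (-x) x := by
    have h := ((hasDerivAt_pow 2 x).neg).div_const 2
    refine h.congr_deriv ?_
    ring
  have h2 := (h1.exp).const_mul (Real.sqrt (2*Real.pi))⁻¹
  unfold phi
  refine h2.congr_deriv ?_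
  ring

def Phi0 (x : ℝ) : ℝ := ∫ t in (0:ℝ)..x, phi t
def G2 (x : ℝ) : ℝ := ∫ t in (0:ℝ)..x, t^2 * phi t
def qq (b : ℝ) : ℝ := Phi0 b - Phi0 (-b)
def ee (b : ℝ) : ℝ := G2 b - G2 (-b)
def mm (b : ℝ) : ℝ := ee b + b^2 * (1 - qq b)

lemma hasDerivAt_Phi0 (x : ℝ) : HasDerivAt Phi0 (phi x) x :=
  intervalIntegral.integral_hasDerivAt_right
    (continuous_phi.intervalIntegrable _ _)
    (continuous_phi.stronglyMeasurable.stronglyMeasurableAtFilter)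
    continuous_phi.continuousAt

lemma continuous_sqphi : Continuous fun t : ℝ => t^2 * phi t :=
  (continuous_pow 2).mul continuous_phi

lemma hasDerivAt_G2 (x : ℝ) : HasDerivAt G2 (x^2 * phi x) x :=
  intervalIntegral.integral_hasDerivAt_right
    (continuous_sqphi.intervalIntegrable _ _)
    (continuous_sqphi.stronglyMeasurable.stronglyMeasurableAtFilter)
    continuous_sqphi.continuousAt

lemma hasDerivAt_qq (b : ℝ) : HasDerivAt qq (2 * phi b) b := by
  have h := (hasDerivAt_Phi0 b).sub (((hasDerivAt_Phi0 (-b)).comp b (hasDerivAt_neg b)))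
  unfold qq
  refine h.congr_deriv ?_
  simp [phi_neg]
  ring

lemma hasDerivAt_ee (b : ℝ) : HasDerivAt ee (2 * b^2 * phi b) b := by
  have h := (hasDerivAt_G2 b).sub (((hasDerivAt_G2 (-b)).comp b (hasDerivAt_neg b)))
  unfold ee
  refine h.congr_deriv ?_
  simp [phi_neg]
  ring

lemma hasDerivAt_mm (b : ℝ) : HasDerivAt mm (2 * b * (1 - qq b)) b := by
  have h2 : HasDerivAt (fun y : ℝ => y^2 * (1 - qq y))
      (2 * b * (1 - qq b) - b^2 * (2 * phi b)) b := by
    have h := (hasDerivAt_pow 2 b).mul ((hasDerivAt_const b (1:ℝ)).sub (hasDerivAt_qq b))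
    refine h.congr_deriv ?_
    norm_num
    ring
  have h := (hasDerivAt_ee b).add h2
  unfold mm
  refine h.congr_deriv ?_
  ring

lemma qq_zero : qq 0 = 0 := by simp [qq]
lemma ee_zero : ee 0 = 0 := by simp [ee]
lemma mm_zero : mm 0 = 0 := by simp [mm, qq_zero, ee_zero]

lemma ee_eq (b : ℝ) : ee b = qq b - 2 * b * phi b := by
  have hd : ∀ x : ℝ, HasDerivAt (fun y => ee y - (qq y - 2 * y * phi y)) 0 x := by
    intro x
    have h2 : HasDerivAt (fun y : ℝ => 2 * y * phi y)
        (2 * phi x + 2 * x * (-x * phi x)) x := by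
      have := ((hasDerivAt_id x).const_mul 2).mul (hasDerivAt_phi x)
      refine this.congr_deriv ?_
      simp only [id_eq]
      ring
    have h := (hasDerivAt_ee x).sub ((hasDerivAt_qq x).sub h2)
    refine h.congr_deriv ?_
    ring
  have hconst := is_const_of_deriv_eq_zero (f := fun y => ee y - (qq y - 2 * y * phi y))
    (fun y => (hd y).differentiableAt) (fun y => (hd y).deriv) b 0
  simp only [qq_zero, ee_zero] at hconst
  norm_num at hconst
  linarith

lemma strictMono_qq : StrictMono qq :=
  strictMono_of_deriv_pos (fun x => by
    rw [(hasDerivAt_qq x).deriv]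
    exact mul_pos two_pos (phi_pos x))

lemma qq_pos {b : ℝ} (hb : 0 < b) : 0 < qq b := by
  have := strictMono_qq hb; rwa [qq_zero] at this

lemma qq_nonneg {b : ℝ} (hb : 0 ≤ b) : 0 ≤ qq b := by
  rcases eq_or_lt_of_le hb with h | h
  · simp [← h, qq_zero]
  · exact (qq_pos h).le

lemma ee_strictMonoOn : StrictMonoOn ee (Set.Ici 0) := by
  refine strictMonoOn_of_deriv_pos (convex_Ici 0)
    (fun x _ => (hasDerivAt_ee x).continuousAt.continuousWithinAt) ?_
  intro x hx
  rw [interior_Ici] at hx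
  rw [(hasDerivAt_ee x).deriv]
  have hx0 : (0:ℝ) < x := hx
  have := phi_pos x
  positivity

lemma ee_pos {b : ℝ} (hb : 0 < b) : 0 < ee b := by
  have := ee_strictMonoOn (Set.self_mem_Ici) (le_of_lt hb : (0:ℝ) ≤ b) hb
  rwa [ee_zero] at this

lemma ee_nonneg {b : ℝ} (hb : 0 ≤ b) : 0 ≤ ee b := by
  rcases eq_or_lt_of_le hb with h | h
  · simp [← h, ee_zero]
  · exact (ee_pos h).le


lemma phi_eq : gaussianPDFReal 0 1 = phi := by
  funext x
  simp [gaussianPDFReal, phi]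

instance : IsProbabilityMeasure stdGaussian := by
  unfold _root_.stdGaussian; infer_instance

lemma stdGaussian_eq :
    _root_.stdGaussian = volume.withDensity (fun x => ENNReal.ofReal (phi x)) := by
  rw [_root_.stdGaussian, gaussianReal_of_var_ne_zero 0 one_ne_zero]
  congr 1
  funext x
  rw [gaussianPDF, phi_eq]

lemma integral_std (g : ℝ → ℝ) :
    ∫ z, g z ∂stdGaussian = ∫ z, g z * phi z := by
  rw [stdGaussian_eq]
  have hm : Measurable fun x => Real.toNNReal (phi x) :=
    measurable_real_toNNReal.comp continuous_phi.measurable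
  have heq : (fun x => ENNReal.ofReal (phi x))
      = fun x => ((Real.toNNReal (phi x) : ℝ≥0) : ℝ≥0∞) := rfl
  rw [heq, integral_withDensity_eq_integral_smul hm]
  congr 1; funext z
  simp [NNReal.smul_def, Real.coe_toNNReal _ (phi_pos z).le, mul_comm]

lemma setIntegral_std (g : ℝ → ℝ) {s : Set ℝ} (hs : MeasurableSet s) :
    ∫ z in s, g z ∂stdGaussian = ∫ z in s, g z * phi z := by
  rw [stdGaussian_eq, restrict_withDensity hs]
  have hm : Measurable fun x => Real.toNNReal (phi x) :=
    measurable_real_toNNReal.comp continuous_phi.measurable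
  have heq : (fun x => ENNReal.ofReal (phi x))
      = fun x => ((Real.toNNReal (phi x) : ℝ≥0) : ℝ≥0∞) := rfl
  rw [heq, integral_withDensity_eq_integral_smul hm]
  congr 1; funext z
  simp [NNReal.smul_def, Real.coe_toNNReal _ (phi_pos z).le, mul_comm]

lemma qq_eq_intervalIntegral (b : ℝ) : qq b = ∫ x in (-b)..b, phi x := by
  simp only [qq, Phi0]
  rw [intervalIntegral.integral_interval_sub_left
    (continuous_phi.intervalIntegrable _ _) (continuous_phi.intervalIntegrable _ _)]

lemma ee_eq_intervalIntegral (b : ℝ) : ee b = ∫ x in (-b)..b, x^2 * phi x := by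
  simp only [ee, G2]
  rw [intervalIntegral.integral_interval_sub_left
    (continuous_sqphi.intervalIntegrable _ _) (continuous_sqphi.intervalIntegrable _ _)]

lemma meas_Ioo {b : ℝ} (hb : 0 ≤ b) :
    (stdGaussian (Set.Ioo (-b) b)).toReal = qq b := by
  rw [_root_.stdGaussian, gaussianReal_apply_eq_integral 0 one_ne_zero]
  rw [ENNReal.toReal_ofReal (by
    apply setIntegral_nonneg measurableSet_Ioo
    intro x _; rw [phi_eq]; exact (phi_pos x).le)]
  rw [phi_eq, qq_eq_intervalIntegral, intervalIntegral.integral_of_le (by linarith : -b ≤ b),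
    integral_Ioc_eq_integral_Ioo]

lemma sq_meas_Ioo {b : ℝ} (hb : 0 ≤ b) :
    ∫ z in Set.Ioo (-b) b, z^2 ∂stdGaussian = ee b := by
  rw [setIntegral_std _ measurableSet_Ioo]
  rw [ee_eq_intervalIntegral, intervalIntegral.integral_of_le (by linarith : -b ≤ b),
    integral_Ioc_eq_integral_Ioo]

lemma qq_le_one {b : ℝ} (hb : 0 ≤ b) : qq b ≤ 1 := by
  rw [← meas_Ioo hb]
  exact ENNReal.toReal_le_of_le_ofReal zero_le_one (by simpa using prob_le_one)

lemma qq_lt_one {b : ℝ} (hb : 0 ≤ b) : qq b < 1 :=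
  lt_of_lt_of_le (strictMono_qq (lt_add_one b)) (qq_le_one (by linarith))


lemma clamp_sq {a u x : ℝ} (ha : 0 ≤ a) :
    (max (-a) (min a (x/u)))^2 = min (a^2) ((x/u)^2) := by
  set y := x/u with hy
  rcases le_total y (-a) with h | h
  · rw [min_eq_right (by linarith), max_eq_left h, min_eq_left (by nlinarith), neg_pow]
    simp
  rcases le_total a y with h2 | h2
  · rw [min_eq_left h2, max_eq_right (by linarith), min_eq_left (by nlinarith)]
  · rw [min_eq_right h2, max_eq_right h, min_eq_right (by nlinarith)]

lemma min_decomp {b : ℝ} (hb : 0 ≤ b) (z : ℝ) :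
    min (b^2) (z^2) = Set.indicator (Set.Ioo (-b) b) (fun z => z^2) z
      + Set.indicator (Set.Ioo (-b) b)ᶜ (fun _ => b^2) z := by
  by_cases hz : z ∈ Set.Ioo (-b) b
  · rw [Set.indicator_of_mem hz, Set.indicator_of_notMem (by simpa using hz), add_zero]
    obtain ⟨h1, h2⟩ := hz
    exact min_eq_right (by nlinarith)
  · rw [Set.indicator_of_notMem hz, Set.indicator_of_mem (by simpa using hz), zero_add]
    rw [Set.mem_Ioo, not_and_or, not_lt, not_lt] at hz
    rcases hz with h | h
    · exact min_eq_left (by nlinarith)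
    · exact min_eq_left (by nlinarith)

lemma integral_min {b : ℝ} (hb : 0 ≤ b) :
    ∫ z, min (b^2) (z^2) ∂stdGaussian = mm b := by
  have hmeas1 : MeasurableSet (Set.Ioo (-b) b) := measurableSet_Ioo
  have hint1 : Integrable ((Set.Ioo (-b) b).indicator (fun z : ℝ => z^2)) stdGaussian := by
    refine Integrable.mono' (integrable_const (b^2))
      (((measurable_id.pow_const 2).indicator hmeas1).aestronglyMeasurable) ?_
    filter_upwards with z
    rw [Real.norm_eq_abs, abs_of_nonneg (Set.indicator_nonneg (fun x _ => sq_nonneg x) z)]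
    by_cases hz : z ∈ Set.Ioo (-b) b
    · rw [Set.indicator_of_mem hz]; obtain ⟨h1, h2⟩ := hz; nlinarith
    · rw [Set.indicator_of_notMem hz]; positivity
  have hint2 : Integrable ((Set.Ioo (-b) b)ᶜ.indicator (fun _ : ℝ => b^2)) stdGaussian := by
    refine Integrable.mono' (integrable_const (b^2))
      ((measurable_const.indicator hmeas1.compl).aestronglyMeasurable) ?_
    filter_upwards with z
    rw [Real.norm_eq_abs, abs_of_nonneg (Set.indicator_nonneg (fun x _ => sq_nonneg b) z)]
    by_cases hz : z ∈ (Set.Ioo (-b) b)ᶜ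
    · rw [Set.indicator_of_mem hz]
    · rw [Set.indicator_of_notMem hz]; positivity
  rw [show (fun z : ℝ => min (b^2) (z^2)) = fun z =>
      Set.indicator (Set.Ioo (-b) b) (fun z : ℝ => z^2) z
        + Set.indicator (Set.Ioo (-b) b)ᶜ (fun _ : ℝ => b^2) z from funext (min_decomp hb)]
  rw [integral_add hint1 hint2, integral_indicator hmeas1, integral_indicator hmeas1.compl]
  rw [sq_meas_Ioo hb, setIntegral_const]
  have hmc : stdGaussian (Set.Ioo (-b) b)ᶜ = 1 - stdGaussian (Set.Ioo (-b) b) := by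
    rw [measure_compl hmeas1 (measure_ne_top _ _)]
    simp
  rw [measureReal_def, hmc, smul_eq_mul, ENNReal.toReal_sub_of_le prob_le_one ENNReal.one_ne_top,
    meas_Ioo hb, mm]
  norm_num
  ring

lemma integral_eta_sq {t γ a : ℝ} (ht : 0 < t) (hu : 0 < 1 + γ) (ha : 0 ≤ a) :
    ∫ z, (eta a γ (Real.sqrt t * z))^2 ∂stdGaussian
      = (t/(1+γ)^2) * mm (a*(1+γ)/Real.sqrt t) := by
  set s := Real.sqrt t with hs
  have hs0 : 0 < s := Real.sqrt_pos.2 ht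
  have hst : s^2 = t := Real.sq_sqrt ht.le
  set b' := a*(1+γ)/s with hb'
  have hb'0 : 0 ≤ b' := by positivity
  have hkey : (fun z : ℝ => (eta a γ (s * z))^2)
      = fun z => (t/(1+γ)^2) * min (b'^2) (z^2) := by
    funext z
    rw [eta, clamp_sq ha]
    have h1 : (s*z/(1+γ))^2 = (t/(1+γ)^2) * z^2 := by
      field_simp
      rw [← hst]; ring
    have h2 : a^2 = (t/(1+γ)^2) * b'^2 := by
      rw [hb']
      field_simp
      rw [hst]
    rw [h1, h2, mul_min_of_nonneg _ _ (by positivity)]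
  rw [hkey, integral_const_mul, integral_min hb'0]

lemma integral_eta' {t γ a : ℝ} (ht : 0 < t) (hu : 0 < 1 + γ) (ha : 0 ≤ a) :
    ∫ z, eta' a γ (Real.sqrt t * z) ∂stdGaussian
      = qq (a*(1+γ)/Real.sqrt t) * (1/(1+γ)) := by
  set s := Real.sqrt t with hs
  have hs0 : 0 < s := Real.sqrt_pos.2 ht
  set b' := a*(1+γ)/s with hb'
  have hb'0 : 0 ≤ b' := by positivity
  have hkey : (fun z : ℝ => eta' a γ (s * z))
      = Set.indicator (Set.Ioo (-b') b') (fun _ => 1/(1+γ)) := by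
    funext z
    rw [eta']
    by_cases hz : z ∈ Set.Ioo (-b') b'
    · rw [Set.indicator_of_mem hz, if_pos]
      obtain ⟨h1, h2⟩ := hz
      rw [abs_mul, abs_of_pos hs0]
      have : |z| < b' := abs_lt.2 ⟨h1, h2⟩
      calc s * |z| < s * b' := by exact mul_lt_mul_of_pos_left this hs0
        _ = a * (1+γ) := by rw [hb']; field_simp
    · rw [Set.indicator_of_notMem hz, if_neg]
      rw [Set.mem_Ioo, not_and_or, not_lt, not_lt] at hz
      rw [abs_mul, abs_of_pos hs0, not_lt]
      have hzb : b' ≤ |z| := by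
        rcases hz with h | h
        · rw [abs_of_nonpos (by linarith)]; linarith
        · rw [abs_of_nonneg (by linarith)]; exact h
      calc a * (1+γ) = s * b' := by rw [hb']; field_simp
        _ ≤ s * |z| := by exact mul_le_mul_of_nonneg_left hzb hs0.le
  rw [hkey, integral_indicator_const _ measurableSet_Ioo, measureReal_def, meas_Ioo hb'0, smul_eq_mul]


lemma mm_nonneg {b : ℝ} (hb : 0 ≤ b) : 0 ≤ mm b := by
  have h1 := ee_nonneg hb
  have h2 := qq_le_one hb
  have : 0 ≤ b^2 * (1 - qq b) := by nlinarith
  unfold mm; linarith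

lemma continuous_mm : Continuous mm :=
  continuous_iff_continuousAt.2 fun x => (hasDerivAt_mm x).differentiableAt.continuousAt

lemma mm_monoOn : MonotoneOn mm (Set.Ici 0) := by
  refine monotoneOn_of_deriv_nonneg (convex_Ici 0) continuous_mm.continuousOn
    (fun x _ => (hasDerivAt_mm x).differentiableAt.differentiableWithinAt) ?_
  intro x hx
  rw [interior_Ici] at hx
  rw [(hasDerivAt_mm x).deriv]
  have hx0 : (0:ℝ) < x := hx
  have := qq_le_one hx0.le
  nlinarith

/-- `u(b) = sqrt(b²/a² + r·m(b))` -/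
def uu (a r b : ℝ) : ℝ := Real.sqrt (b^2/a^2 + r * mm b)

/-- `F(b) = (u-1)(u-r·q)/u` -/
def FF (a r b : ℝ) : ℝ := (uu a r b - 1) * (uu a r b - r * qq b) / uu a r b

lemma continuous_qq : Continuous qq :=
  continuous_iff_continuousAt.2 fun x => (hasDerivAt_qq x).differentiableAt.continuousAt

section params
variable {a r : ℝ} (ha : 0 < a) (hr : 0 < r)

include ha hr

lemma inner_nonneg {b : ℝ} (hb : 0 ≤ b) : 0 ≤ b^2/a^2 + r * mm b :=
  add_nonneg (by positivity) (mul_nonneg hr.le (mm_nonneg hb))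

lemma inner_pos {b : ℝ} (hb : 0 < b) : 0 < b^2/a^2 + r * mm b :=
  add_pos_of_pos_of_nonneg (by positivity) (mul_nonneg hr.le (mm_nonneg hb.le))

lemma uu_pos {b : ℝ} (hb : 0 < b) : 0 < uu a r b :=
  Real.sqrt_pos.2 (inner_pos ha hr hb)

lemma uu_sq {b : ℝ} (hb : 0 ≤ b) : (uu a r b)^2 = b^2/a^2 + r * mm b :=
  Real.sq_sqrt (inner_nonneg ha hr hb)

lemma uu_zero : uu a r 0 = 0 := by
  simp [uu, mm_zero]

lemma uu_strictMonoOn : StrictMonoOn (uu a r) (Set.Ici 0) := by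
  intro x hx y hy hxy
  apply Real.sqrt_lt_sqrt (inner_nonneg ha hr hx)
  have hx0 : (0:ℝ) ≤ x := hx
  have h1 : x^2 < y^2 := by nlinarith
  have h2 : mm x ≤ mm y := mm_monoOn hx hy hxy.le
  have ha2 : (0:ℝ) < (a^2)⁻¹ := by positivity
  have h3 : x^2/a^2 < y^2/a^2 := by
    rw [div_eq_mul_inv, div_eq_mul_inv]
    nlinarith
  nlinarith

lemma uu_monoOn : MonotoneOn (uu a r) (Set.Ici 0) :=
  (uu_strictMonoOn ha hr).monotoneOn

lemma uu_ge {b : ℝ} (hb : 0 ≤ b) : b/a ≤ uu a r b := by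
  rw [show b/a = Real.sqrt ((b/a)^2) from (Real.sqrt_sq (by positivity)).symm]
  apply Real.sqrt_le_sqrt
  have := mm_nonneg hb
  rw [div_pow]
  nlinarith

lemma continuous_uu : Continuous (uu a r) := by
  apply Real.continuous_sqrt.comp
  exact ((continuous_pow 2).div_const _).add (continuous_const.mul continuous_mm)

lemma hasDerivAt_uu {b : ℝ} (hb : 0 < b) :
    HasDerivAt (uu a r) ((b/a^2 + r*b*(1 - qq b))/(uu a r b)) b := by
  have hinner : HasDerivAt (fun b : ℝ => b^2/a^2 + r * mm b)
      (2*b/a^2 + r*(2*b*(1 - qq b))) b := by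
    have h1 := (hasDerivAt_pow 2 b).div_const (a^2)
    have h2 := (hasDerivAt_mm b).const_mul r
    have h := h1.add h2
    refine h.congr_deriv ?_
    push_cast
    ring_nf
  have hne : b^2/a^2 + r * mm b ≠ 0 := (inner_pos ha hr hb).ne'
  have h : HasDerivAt (fun y : ℝ => Real.sqrt (y^2/a^2 + r*mm y))
      (1/(2*Real.sqrt (b^2/a^2 + r*mm b)) * (2*b/a^2 + r*(2*b*(1 - qq b)))) b :=
    (Real.hasDerivAt_sqrt hne).comp b hinner
  have hu := uu_pos ha hr hb
  have husq := uu_sq ha hr hb.le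
  unfold uu at hu ⊢
  convert h using 1
  field_simp

lemma hasDerivAt_FF {b : ℝ} (hb : 0 < b) :
    HasDerivAt (FF a r)
      ((((b/a^2 + r*b*(1 - qq b))/(uu a r b)) * ((uu a r b)^2 - r * qq b)
        - 2*r*(phi b)*(uu a r b)*(uu a r b - 1)) / (uu a r b)^2) b := by
  have hu := hasDerivAt_uu ha hr hb
  have hq := hasDerivAt_qq b
  have hU := uu_pos ha hr hb
  have h := ((hu.sub_const 1).mul (hu.sub (hq.const_mul r))).div hu hU.ne'
  have hFF : FF a r = fun b => (uu a r b - 1) * (uu a r b - r * qq b) / uu a r b := rfl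
  rw [hFF]
  refine h.congr_deriv ?_
  simp only [Pi.mul_apply, Pi.sub_apply]
  field_simp
  ring

lemma deriv_FF_pos {b : ℝ} (hb : 0 < b) (hreg : r * qq b < uu a r b) :
    0 < (((b/a^2 + r*b*(1 - qq b))/(uu a r b)) * ((uu a r b)^2 - r * qq b)
        - 2*r*(phi b)*(uu a r b)*(uu a r b - 1)) / (uu a r b)^2 := by
  set U := uu a r b with hUdef
  set Q := qq b with hQdef
  set P := phi b with hPdef
  have hU0 : 0 < U := uu_pos ha hr hb
  have hQ0 : 0 < Q := qq_pos hb
  have hP0 : 0 < P := phi_pos b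
  have hE0 : 0 < Q - 2*b*P := by
    have h := ee_pos hb; rw [ee_eq] at h; rw [← hQdef, ← hPdef] at h; linarith
  have hU2 : U^2 = b^2/a^2 + r * (Q - 2*b*P + b^2*(1-Q)) := by
    rw [hUdef, uu_sq ha hr hb.le, mm, ee_eq, ← hQdef, ← hPdef]
  have hsb : b^2/a^2 = U^2 - r * (Q - 2*b*P) - r*b^2*(1-Q) := by linarith
  set num := ((b/a^2 + r*b*(1 - Q))/U) * (U^2 - r * Q) - 2*r*P*U*(U - 1) with hnum
  have hnumU : num * U = (b/a^2 + r*b*(1-Q))*(U^2 - r*Q) - 2*r*P*U^2*(U-1) := by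
    rw [hnum]; field_simp
  have key : num * (U * (b * Q))
      = (Q - 2*b*P) * (U^2 - r*Q)^2 + 2*b*P*U^3*(U - r*Q) := by
    calc num * (U * (b * Q)) = (num * U) * (b*Q) := by ring
      _ = _ := by rw [hnumU]; linear_combination (Q*(U^2 - r*Q)) * hsb
  have hRHS : 0 < (Q - 2*b*P) * (U^2 - r*Q)^2 + 2*b*P*U^3*(U - r*Q) := by
    have h1 : 0 ≤ (Q - 2*b*P) * (U^2 - r*Q)^2 := by positivity
    have h2 : 0 < 2*b*P*U^3*(U - r*Q) := by
      have : 0 < U - r*Q := by linarith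
      positivity
    linarith
  have hfac : 0 < U * (b * Q) := by positivity
  have hnum0 : 0 < num := by
    by_contra h
    push_neg at h
    have := mul_nonpos_of_nonpos_of_nonneg h hfac.le
    rw [key] at this
    linarith
  exact div_pos hnum0 (by positivity)

lemma FF_strictMonoOn {x y : ℝ} (hx : 0 < x)
    (hreg : ∀ z ∈ Set.Ioo x y, r * qq z < uu a r z) :
    StrictMonoOn (FF a r) (Set.Icc x y) := by
  refine strictMonoOn_of_deriv_pos (convex_Icc x y) ?_ ?_
  · intro z hz
    exact ((hasDerivAt_FF ha hr (lt_of_lt_of_le hx hz.1)).continuousAt).continuousWithinAt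
  · intro z hz
    rw [interior_Icc] at hz
    have hz0 : 0 < z := lt_trans hx hz.1
    rw [(hasDerivAt_FF ha hr hz0).deriv]
    exact deriv_FF_pos ha hr hz0 (hreg z hz)

lemma FF_nonpos {b : ℝ} (hb : 0 < b) (h1 : 1 < uu a r b) (h2 : uu a r b ≤ r * qq b) :
    FF a r b ≤ 0 := by
  have hU := uu_pos ha hr hb
  rw [FF]
  apply div_nonpos_of_nonpos_of_nonneg _ hU.le
  nlinarith

lemma reg_of_root {b ρ : ℝ} (hρ : 0 < ρ) (hb : 0 < b) (h1 : 1 < uu a r b)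
    (hf : FF a r b = ρ) : r * qq b < uu a r b := by
  by_contra h
  push_neg at h
  have := FF_nonpos ha hr hb h1 h
  linarith [hf ▸ this]

lemma root_lt_aux {ρ b₁ b₂ : ℝ} (hρ : 0 < ρ) (h1 : 0 < b₁)
    (hu1 : 1 < uu a r b₁) (hu2 : 1 < uu a r b₂)
    (hf1 : FF a r b₁ = ρ) (hf2 : FF a r b₂ = ρ) (hlt : b₁ < b₂) : False := by
  have h2 : 0 < b₂ := lt_trans h1 hlt
  have hreg1 : r * qq b₁ < uu a r b₁ := reg_of_root ha hr hρ h1 hu1 hf1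
  have hreg2 : r * qq b₂ < uu a r b₂ := reg_of_root ha hr hρ h2 hu2 hf2
  set g := fun z => uu a r z - r * qq z with hg
  have hgc : Continuous g := (continuous_uu ha hr).sub (continuous_const.mul continuous_qq)
  by_cases hS : ∃ z ∈ Set.Icc b₁ b₂, g z ≤ 0
  · -- take infimum of bad set
    set S := {z ∈ Set.Icc b₁ b₂ | g z ≤ 0} with hSdef
    have hSne : S.Nonempty := by obtain ⟨z, hz1, hz2⟩ := hS; exact ⟨z, hz1, hz2⟩
    have hSclosed : IsClosed S := by
      have hseq : S = Set.Icc b₁ b₂ ∩ g ⁻¹' (Set.Iic 0) := rfl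
      rw [hseq]
      exact isClosed_Icc.inter (isClosed_Iic.preimage hgc)
    have hSbdd : BddBelow S := ⟨b₁, fun z hz => hz.1.1⟩
    set z₀ := sInf S with hz₀
    have hz₀S : z₀ ∈ S := hSclosed.csInf_mem hSne hSbdd
    have hz₀1 : b₁ < z₀ := by
      rcases lt_or_eq_of_le hz₀S.1.1 with h | h
      · exact h
      · exfalso; have := hz₀S.2; rw [← h] at this; simp only [hg] at this; linarith
    have hgpos : ∀ w ∈ Set.Ico b₁ z₀, 0 < g w := by
      intro w hw
      by_contra hc
      push_neg at hc
      have hwS : w ∈ S := ⟨⟨hw.1, le_of_lt (lt_of_lt_of_le hw.2 hz₀S.1.2)⟩, hc⟩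
      have := csInf_le hSbdd hwS
      rw [← hz₀] at this
      linarith [hw.2]
    have hmono : StrictMonoOn (FF a r) (Set.Icc b₁ z₀) := by
      apply FF_strictMonoOn ha hr h1
      intro z hz
      have := hgpos z ⟨hz.1.le, hz.2⟩
      simp only [hg] at this
      linarith
    have hlt2 : FF a r b₁ < FF a r z₀ :=
      hmono ⟨le_refl _, hz₀1.le⟩ ⟨hz₀1.le, le_refl _⟩ hz₀1
    have huz : 1 < uu a r z₀ :=
      lt_trans hu1 (uu_strictMonoOn ha hr (le_of_lt h1) (le_of_lt (lt_trans h1 hz₀1)) hz₀1)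
    have hz₀0 : 0 < z₀ := lt_trans h1 hz₀1
    have hle : uu a r z₀ ≤ r * qq z₀ := by
      have := hz₀S.2; simp only [hg] at this; linarith
    have := FF_nonpos ha hr hz₀0 huz hle
    rw [hf1] at hlt2
    linarith
  · push_neg at hS
    have hmono : StrictMonoOn (FF a r) (Set.Icc b₁ b₂) := by
      apply FF_strictMonoOn ha hr h1
      intro z hz
      have := hS z ⟨hz.1.le, hz.2.le⟩
      simp only [hg] at this
      linarith
    have := hmono ⟨le_refl _, hlt.le⟩ ⟨hlt.le, le_refl _⟩ hlt
    rw [hf1, hf2] at this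
    exact lt_irrefl _ this

lemma root_unique {ρ b₁ b₂ : ℝ} (hρ : 0 < ρ) (h1 : 0 < b₁) (h2 : 0 < b₂)
    (hu1 : 1 < uu a r b₁) (hu2 : 1 < uu a r b₂)
    (hf1 : FF a r b₁ = ρ) (hf2 : FF a r b₂ = ρ) : b₁ = b₂ := by
  rcases lt_trichotomy b₁ b₂ with h | h | h
  · exact absurd (root_lt_aux ha hr hρ h1 hu1 hu2 hf1 hf2 h) not_false
  · exact h
  · exact absurd (root_lt_aux ha hr hρ h2 hu2 hu1 hf2 hf1 h) not_false

lemma root_exists {ρ : ℝ} (hρ : 0 < ρ) : ∃ b, 0 < b ∧ 1 < uu a r b ∧ FF a r b = ρ := by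
  -- find b₁ with uu b₁ = 1
  have h2a : (2:ℝ) ≤ uu a r (2*a) := by
    have := uu_ge ha hr (by positivity : (0:ℝ) ≤ 2*a)
    rwa [show 2*a/a = 2 by field_simp] at this
  obtain ⟨b₁, hb₁mem, hb₁⟩ : ∃ b₁ ∈ Set.Icc 0 (2*a), uu a r b₁ = 1 := by
    have hmem : (1:ℝ) ∈ Set.Icc (uu a r 0) (uu a r (2*a)) := by
      rw [uu_zero ha hr]
      exact ⟨zero_le_one, by linarith⟩
    exact intermediate_value_Icc (by positivity : (0:ℝ) ≤ 2*a)
      ((continuous_uu ha hr).continuousOn) hmem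
  have hb₁pos : 0 < b₁ := by
    rcases lt_or_eq_of_le hb₁mem.1 with h | h
    · exact h
    · exfalso; rw [← h, uu_zero ha hr] at hb₁; norm_num at hb₁
  have hFFb₁ : FF a r b₁ = 0 := by rw [FF, hb₁]; simp
  -- pick b' slightly to the right with FF b' < ρ
  have hcont : ContinuousAt (FF a r) b₁ :=
    (hasDerivAt_FF ha hr hb₁pos).differentiableAt.continuousAt
  have hev : ∀ᶠ x in 𝓝[>] b₁, FF a r x < ρ :=
    (hcont.tendsto.eventually_lt_const (by rw [hFFb₁]; exact hρ)).filter_mono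
      nhdsWithin_le_nhds
  obtain ⟨b', hb'2, hb'1⟩ : ∃ b', FF a r b' < ρ ∧ b₁ < b' := by
    obtain ⟨x, hx1, hx2⟩ := (hev.and (eventually_mem_nhdsWithin)).exists
    exact ⟨x, hx1, hx2⟩
  have hb'pos : 0 < b' := lt_trans hb₁pos hb'1
  have hub' : 1 < uu a r b' := by
    have := uu_strictMonoOn ha hr (hb₁mem.1 : b₁ ∈ Set.Ici 0)
      (le_of_lt hb'pos : b' ∈ Set.Ici 0) hb'1
    rwa [hb₁] at this
  -- pick B large with FF B > ρ
  set B := max (a*(r+ρ+2)) (b'+1) with hB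
  have hBb' : b' + 1 ≤ B := le_max_right _ _
  have hB0 : 0 < B := lt_of_lt_of_le (by linarith) hBb'
  have hUB : r + ρ + 2 ≤ uu a r B := by
    have h1 : a*(r+ρ+2) ≤ B := le_max_left _ _
    have h2 : r + ρ + 2 ≤ B/a := by rw [le_div_iff₀ ha]; linarith
    exact le_trans h2 (uu_ge ha hr hB0.le)
  have hQB0 : 0 ≤ qq B := qq_nonneg hB0.le
  have hQB1 : qq B ≤ 1 := qq_le_one hB0.le
  have hUB0 : 0 < uu a r B := uu_pos ha hr hB0
  have hFB : ρ < FF a r B := by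
    rw [FF, lt_div_iff₀ hUB0]
    have hrq : r * qq B ≤ r := by nlinarith
    nlinarith [hUB0, hUB, hρ, hr]
  -- IVT
  have hc : ContinuousOn (FF a r) (Set.Icc b' B) := fun z hz =>
    ((hasDerivAt_FF ha hr (lt_of_lt_of_le hb'pos hz.1)).differentiableAt.continuousAt).continuousWithinAt
  obtain ⟨bs, hbsmem, hbsf⟩ :=
    intermediate_value_Icc (by linarith : b' ≤ B) hc ⟨hb'2.le, hFB.le⟩
  refine ⟨bs, lt_of_lt_of_le hb'pos hbsmem.1, ?_, hbsf⟩
  have := uu_monoOn ha hr (le_of_lt hb'pos : b' ∈ Set.Ici 0)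
    (le_of_lt (lt_of_lt_of_le hb'pos hbsmem.1) : bs ∈ Set.Ici 0) hbsmem.1
  linarith

end params

end SEAux
end SEProofAux

open SEAux

/-- Lemma 1. For `δ > 0`, `ρ > 0` and `a ≥ 0`, there exists a unique pair
`(τ², γ)` with `τ² ≥ 1` and `γ > 0` satisfying the state-evolution fixed-point equations
`τ² = 1 + δ⁻¹ E[η_a(τZ; γ)²]` and `ρ = γ (1 − δ⁻¹ E[η_a'(τZ; γ)])`. -/
theorem se_fixed_point_exists_unique (δ ρ a : ℝ) (hδ : 0 < δ) (hρ : 0 < ρ) (ha : 0 ≤ a) :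
    ∃! p : ℝ × ℝ, IsSEFixedPoint δ ρ a p := by
  rcases eq_or_lt_of_le ha with ha0 | hapos
  · -- a = 0 : eta and eta' vanish
    have heta : ∀ γ x : ℝ, eta a γ x = 0 := by
      intro γ x
      rw [eta, ← ha0, neg_zero]
      exact max_eq_left (min_le_left _ _)
    have heta' : ∀ γ x : ℝ, eta' a γ x = 0 := by
      intro γ x
      rw [eta', ← ha0, if_neg]
      rw [zero_mul, not_lt]
      exact abs_nonneg x
    refine ⟨(1, ρ), ⟨le_refl 1, hρ, ?_, ?_⟩, ?_⟩
    · simp [heta]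
    · simp [heta']
    · rintro ⟨t, γ⟩ ⟨h1, h2, h3, h4⟩
      simp only [heta, heta'] at h3 h4
      simp at h3 h4
      refine Prod.ext (by simpa using h3) ?_
      show γ = ρ
      have : ρ = γ := by simpa using h4
      exact this.symm
  · -- a > 0
    set r := δ⁻¹ with hrdef
    have hr : 0 < r := inv_pos.2 hδ
    obtain ⟨b, hb, hub, hfb⟩ := root_exists hapos hr hρ
    set U := uu a r b with hUdef
    have hU0 : 0 < U := uu_pos hapos hr hb
    have hU1 : 1 < U := hub
    have hU2 : U^2 = b^2/a^2 + r * mm b := uu_sq hapos hr hb.le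
    have hmm : 0 ≤ mm b := mm_nonneg hb.le
    set γ := U - 1 with hγdef
    have hγ : 0 < γ := by rw [hγdef]; linarith
    have h1γ : 1 + γ = U := by rw [hγdef]; ring
    set t := a^2*U^2/b^2 with htdef
    have ht0 : 0 < t := by positivity
    have hteq : t = 1 + a^2*(r*mm b)/b^2 := by
      rw [htdef, hU2]; field_simp
    have ht1 : 1 ≤ t := by
      rw [hteq]
      have : 0 ≤ a^2*(r*mm b)/b^2 := by positivity
      linarith
    have hsqrt : Real.sqrt t = a*U/b := by
      rw [show t = (a*U/b)^2 by rw [htdef]; ring]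
      exact Real.sqrt_sq (by positivity)
    have hbb : a*(1+γ)/Real.sqrt t = b := by
      rw [hsqrt, h1γ]
      field_simp
    refine ⟨(t, γ), ⟨ht1, hγ, ?_, ?_⟩, ?_⟩
    · -- first equation
      show t = 1 + δ⁻¹ * ∫ z, (eta a γ (Real.sqrt t * z))^2 ∂stdGaussian
      rw [integral_eta_sq ht0 (by linarith) ha, hbb, h1γ, ← hrdef]
      have hkey : t/U^2 = a^2/b^2 := by
        rw [htdef]; field_simp
      rw [hkey, hteq]
      ring
    · -- second equation
      show ρ = γ * (1 - δ⁻¹ * ∫ z, eta' a γ (Real.sqrt t * z) ∂stdGaussian)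
      rw [integral_eta' ht0 (by linarith) ha, hbb, h1γ, ← hrdef, ← hfb]
      rw [FF, ← hUdef, hγdef]
      field_simp
    · -- uniqueness
      rintro ⟨tq, γq⟩ ⟨hq1, hq2, hq3, hq4⟩
      simp only at hq1 hq2 hq3 hq4
      have htq0 : 0 < tq := lt_of_lt_of_le zero_lt_one hq1
      have hUq0 : 0 < 1 + γq := by linarith
      set bq := a*(1+γq)/Real.sqrt tq with hbqdef
      have hsq0 : 0 < Real.sqrt tq := Real.sqrt_pos.2 htq0
      have hbq0 : 0 < bq := by rw [hbqdef]; positivity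
      rw [integral_eta_sq htq0 hUq0 ha, ← hbqdef, ← hrdef] at hq3
      rw [integral_eta' htq0 hUq0 ha, ← hbqdef, ← hrdef] at hq4
      have hbqsq : bq^2 = a^2*(1+γq)^2/tq := by
        rw [hbqdef, div_pow, Real.sq_sqrt htq0.le]; ring
      have hinner : bq^2/a^2 + r*mm bq = (1+γq)^2 := by
        have h3 : tq = 1 + r * (tq/(1+γq)^2 * mm bq) := hq3
        have ha2 : (0:ℝ) < a^2 := by positivity
        have hUq2 : (0:ℝ) < (1+γq)^2 := by positivity
        -- from h3 : r * mm bq = (tq - 1)*(1+γq)^2/tq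
        have hrmm : r * mm bq = (tq - 1)*(1+γq)^2/tq := by
          field_simp at h3 ⊢
          linarith [h3]
        rw [hbqsq, hrmm]
        field_simp
        ring
      have huq : uu a r bq = 1 + γq := by
        rw [uu, show bq^2/a^2 + r * mm bq = (1+γq)^2 from hinner]
        exact Real.sqrt_sq hUq0.le
      have hfq : FF a r bq = ρ := by
        rw [FF, huq, hq4]
        field_simp
        ring
      have huq1 : 1 < uu a r bq := by rw [huq]; linarith
      have hbeq : b = bq := root_unique hapos hr hρ hb hbq0 hub huq1 hfb hfq
      have hγeq : γq = γ := by
        have := huq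
        rw [← hbeq, ← hUdef] at this
        rw [hγdef]; linarith
      have hteqq : tq = t := by
        have hsq : Real.sqrt tq = a*(1+γq)/bq := by
          rw [hbqdef]; field_simp
        have : tq = (Real.sqrt tq)^2 := (Real.sq_sqrt htq0.le).symm
        rw [this, hsq, ← hbeq, hγeq, h1γ, htdef]
        ring
      exact Prod.ext hteqq hγeq
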